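/- In the semigroup $T := (\mathbb{N}\times\mathbb{N}) \cup \{0\}$ with $0 + x = x + 0 = 0$ and $(m_1,n_1)+(m_2,n_2) := (m_1, n_1+n_2)$ if $m_1 = m_2$ and $0$ otherwise, the sequence $a_n := (n, 1)$ is injective and $FS_{\ge 2}(a_n) = \{0\}$; hence proper IP sets in $T$ are not partition regular. -/

import Mathlib

/-- The ordered sum `a_{i_1} + ⋯ + a_{i_m}` over a finite index set
`F = {i_1 < ⋯ < i_m}` (junk value `a 0` if `F = ∅`). -/
def ordsum {S : Type*} [AddSemigroup S] (a : ℕ → S) (F : Finset ℕ) : S :=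
  match F.sort (· ≤ ·) with
  | [] => a 0
  | i :: l => l.foldl (fun s j => s + a j) (a i)

/-- `F < G`: every element of `F` is smaller than every element of `G`. -/
def FinsetLT (F G : Finset ℕ) : Prop := ∀ i ∈ F, ∀ j ∈ G, i < j

/-- `FS(a_1, a_2, …)`: the set of all finite ordered sums of the sequence `a`. -/
def FSset {S : Type*} [AddSemigroup S] (a : ℕ → S) : Set S :=
  {s | ∃ F : Finset ℕ, F.Nonempty ∧ ordsum a F = s}

/-- `FS(a_n, a_{n+1}, …)`: finite ordered sums with all indices `≥ n`. -/
def FStail {S : Type*} [AddSemigroup S] (a : ℕ → S) (n : ℕ) : Set S :=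
  {s | ∃ F : Finset ℕ, F.Nonempty ∧ (∀ i ∈ F, n ≤ i) ∧ ordsum a F = s}

/-- A sequence is proper if `a_{F₁} ≠ a_{F₂}` whenever `F₁ < F₂`. -/
def IsProperSeq {S : Type*} [AddSemigroup S] (a : ℕ → S) : Prop :=
  ∀ F G : Finset ℕ, F.Nonempty → G.Nonempty → FinsetLT F G →
    ordsum a F ≠ ordsum a G

/-- `b` is a sumsequence of `a`: `b_k = a_{F_k}` for finite index sets `F₁ < F₂ < ⋯`. -/
def IsSumseq {S : Type*} [AddSemigroup S] (a b : ℕ → S) : Prop :=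
  ∃ F : ℕ → Finset ℕ, (∀ k, (F k).Nonempty) ∧
    (∀ k, FinsetLT (F k) (F (k + 1))) ∧ (∀ k, b k = ordsum a (F k))


/-- A proper IP set: contains `FS(b)` for an injective sequence `b`. -/
def IsProperIP {S : Type*} [AddSemigroup S] (A : Set S) : Prop :=
  ∃ b : ℕ → S, Function.Injective b ∧ FSset b ⊆ A

/-- Partition regularity of the family of proper IP sets of `S`. -/
def ProperIPPartReg (S : Type*) [AddSemigroup S] : Prop :=
  ∀ A : Set S, IsProperIP A → ∀ (k : ℕ) (c : S → Fin k),
    ∃ i : Fin k, IsProperIP {s ∈ A | c s = i}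

/-- `FS(b_0, …, b_{n-1})`: ordered sums over nonempty `F ⊆ {0, …, n-1}`. -/
def FSfin {S : Type*} [AddSemigroup S] (a : ℕ → S) (n : ℕ) : Set S :=
  {s | ∃ F : Finset ℕ, F.Nonempty ∧ F ⊆ Finset.range n ∧ ordsum a F = s}

/-- `FS_{≥2}(a)`: ordered sums with at least two summands. -/
def FS2set {S : Type*} [AddSemigroup S] (a : ℕ → S) : Set S :=
  {s | ∃ F : Finset ℕ, 2 ≤ F.card ∧ ordsum a F = s}

/-- The semigroup `(ℕ × ℕ) ∪ {0}`: `0` is absorbing, `(m,n₁)+(m,n₂) = (m,n₁+n₂)`,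
and sums of pairs with distinct first coordinates equal `0` (here `0 = none`). -/
def T : Type := Option (ℕ × ℕ)

/-- The element `(m, n)` of `T`. -/
def Tmk (m n : ℕ) : T := some (m, n)

/-- The absorbing element `0` of `T`. -/
def Tzero : T := none

def Tadd (x y : T) : T :=
  match x, y with
  | some (m1, n1), some (m2, n2) => if m1 = m2 then some (m1, n1 + n2) else none
  | _, _ => none

theorem Tadd_assoc (x y z : T) : Tadd (Tadd x y) z = Tadd x (Tadd y z) := by
  have key : ∀ a b c d : ℕ, Tadd (some (a, b)) (some (c, d)) =
      if a = c then some (a, b + d) else none := fun _ _ _ _ => rfl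
  have hn2 : ∀ x : T, Tadd x none = none := fun x => by rcases x with _ | ⟨_, _⟩ <;> rfl
  rcases x with _ | ⟨m1, n1⟩
  · rfl
  rcases y with _ | ⟨m2, n2⟩
  · rfl
  rcases z with _ | ⟨m3, n3⟩
  · exact (hn2 _).trans ((congrArg _ (hn2 _)).trans (hn2 _)).symm
  by_cases h1 : m1 = m2 <;> by_cases h2 : m2 = m3
  · subst h1 h2
    rw [key m1 n1 m1 n2, if_pos rfl, key m1 (n1 + n2) m1 n3, if_pos rfl, key m1 n2 m1 n3,
      if_pos rfl, key m1 n1 m1 (n2 + n3), if_pos rfl, Nat.add_assoc]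
  · rw [key m1 n1 m2 n2, if_pos h1, key m1 (n1 + n2) m3 n3, if_neg (by omega),
      key m2 n2 m3 n3, if_neg h2]
    exact (hn2 _).symm
  · rw [key m1 n1 m2 n2, if_neg h1, key m2 n2 m3 n3, if_pos h2,
      key m1 n1 m2 (n2 + n3), if_neg h1]
    rfl
  · rw [key m1 n1 m2 n2, if_neg h1, key m2 n2 m3 n3, if_neg h2]
    exact ((hn2 _).symm : _)

instance : AddSemigroup T where
  add := Tadd
  add_assoc := Tadd_assoc


theorem Tadd_def (x y : T) : x + y = Tadd x y := rfl

theorem Tzero_add (y : T) : Tzero + y = Tzero := rfl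

theorem foldl_zero (a : ℕ → T) (l : List ℕ) :
    l.foldl (fun s j => s + a j) Tzero = Tzero := by
  induction l with
  | nil => rfl
  | cons j l ih => simpa [Tzero_add] using ih

theorem ordsum_singleton {S : Type*} [AddSemigroup S] (a : ℕ → S) (k : ℕ) :
    ordsum a {k} = a k := by
  simp [ordsum, Finset.sort_singleton]

theorem pair_eq_range : ({0, 1} : Finset ℕ) = Finset.range 2 := by
  ext x; simp [Finset.mem_range]; omega

theorem sort_pair : ({0, 1} : Finset ℕ).sort (· ≤ ·) = [0, 1] := by
  rw [pair_eq_range, Finset.sort_range]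
  rfl

theorem ordsum_pair {S : Type*} [AddSemigroup S] (a : ℕ → S) :
    ordsum a {0, 1} = a 0 + a 1 := by
  simp [ordsum, sort_pair]

theorem ordsum_eq_zero (F : Finset ℕ) (h : 2 ≤ F.card) :
    ordsum (fun n => Tmk n 1) F = Tzero := by
  rcases hl : F.sort (· ≤ ·) with _ | ⟨i, _ | ⟨j, rest⟩⟩
  · have := Finset.length_sort (α := ℕ) (· ≤ ·) (s := F)
    rw [hl] at this; simp at this; omega
  · have := Finset.length_sort (α := ℕ) (· ≤ ·) (s := F)
    rw [hl] at this; simp at this; omega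
  · have hnd : (F.sort (· ≤ ·)).Nodup := F.sort_nodup _
    rw [hl] at hnd
    have hij : i ≠ j := by simp at hnd; tauto
    have h1 : Tmk i 1 + Tmk j 1 = Tzero := by
      exact (show Tadd (some (i, 1)) (some (j, 1)) = if i = j then some (i, 1 + 1) else none
        from rfl).trans (if_neg hij)
    unfold ordsum
    rw [hl]
    simp only [List.foldl_cons, h1]
    exact foldl_zero _ rest

theorem mem_FSset_cases (s : T) (hs : s ∈ FSset (fun n => Tmk n 1)) :
    s = Tzero ∨ ∃ k, s = Tmk k 1 := by
  obtain ⟨F, hF, hord⟩ := hs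
  rcases Nat.lt_or_ge F.card 2 with hc | hc
  · have h1 : F.card = 1 := by
      have := Finset.card_pos.mpr hF; omega
    obtain ⟨k, hk⟩ := Finset.card_eq_one.mp h1
    right; exact ⟨k, by rw [← hord, hk, ordsum_singleton]⟩
  · left; rw [← hord, ordsum_eq_zero F hc]

theorem stmt16 :
    Function.Injective (fun n : ℕ => Tmk n 1) ∧
    FS2set (fun n : ℕ => Tmk n 1) = {Tzero} ∧
    ¬ ProperIPPartReg T := by
  have hinj : Function.Injective (fun n : ℕ => Tmk n 1) := by
    intro m n h
    exact congrArg Prod.fst (Option.some.inj h)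
  have hFS2 : FS2set (fun n : ℕ => Tmk n 1) = {Tzero} := by
    ext s
    constructor
    · rintro ⟨F, hF, rfl⟩
      exact ordsum_eq_zero F hF
    · rintro rfl
      refine ⟨{0, 1}, by rw [pair_eq_range, Finset.card_range], ?_⟩
      rw [ordsum_pair]
      rfl
  refine ⟨hinj, hFS2, ?_⟩
  intro hreg
  classical
  set a : ℕ → T := fun n => Tmk n 1 with ha
  have hIP : IsProperIP (FSset a) := ⟨a, hinj, le_refl _⟩
  obtain ⟨i, b, hbinj, hbsub⟩ := hreg (FSset a) hIP 2
    (fun s => if s = Tzero then 0 else 1)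
  have hb0 : b 0 ∈ {s ∈ FSset a | (if s = Tzero then (0 : Fin 2) else 1) = i} :=
    hbsub ⟨{0}, Finset.singleton_nonempty _, ordsum_singleton b 0⟩
  have hb1 : b 1 ∈ {s ∈ FSset a | (if s = Tzero then (0 : Fin 2) else 1) = i} :=
    hbsub ⟨{1}, Finset.singleton_nonempty _, ordsum_singleton b 1⟩
  have hb01 : b 0 + b 1 ∈ {s ∈ FSset a | (if s = Tzero then (0 : Fin 2) else 1) = i} :=
    hbsub ⟨{0, 1}, ⟨0, by simp⟩, ordsum_pair b⟩
  by_cases hi : i = 0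
  · subst hi
    have h0 : b 0 = Tzero := by
      by_contra h; simp [h] at hb0
    have h1 : b 1 = Tzero := by
      by_contra h; simp [h] at hb1
    exact absurd (hbinj (h0.trans h1.symm)) (by omega)
  · have hi1 : i = 1 := by omega
    subst hi1
    have hne0 : b 0 ≠ Tzero := by
      intro h; simp [h] at hb0
    have hne1 : b 1 ≠ Tzero := by
      intro h; simp [h] at hb1
    have hne01 : b 0 + b 1 ≠ Tzero := by
      intro h; simp [h] at hb01
    obtain ⟨m0, hm0⟩ : ∃ k, b 0 = Tmk k 1 :=
      (mem_FSset_cases _ hb0.1).resolve_left hne0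
    obtain ⟨m1, hm1⟩ : ∃ k, b 1 = Tmk k 1 :=
      (mem_FSset_cases _ hb1.1).resolve_left hne1
    obtain ⟨m2, hm2⟩ : ∃ k, b 0 + b 1 = Tmk k 1 :=
      (mem_FSset_cases _ hb01.1).resolve_left hne01
    rw [hm0, hm1] at hm2
    by_cases hmm : m0 = m1
    · change (if m0 = m1 then some (m0, 1 + 1) else none : Option (ℕ × ℕ)) = some (m2, 1) at hm2
      rw [if_pos hmm] at hm2
      exact absurd (congrArg Prod.snd (Option.some.inj hm2)) (by omega)
    · change (if m0 = m1 then some (m0, 1 + 1) else none : Option (ℕ × ℕ)) = some (m2, 1) at hm2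
      rw [if_neg hmm] at hm2
      exact Option.some_ne_none _ hm2.symm
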